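/- Let G be a simplicial group, n ≥ 1, and define p_j : G_n → G_n by p_j(z) = z · s_j d_j(z)^{-1} for 0 ≤ j ≤ n−1. Then for every z ∈ G_n, the composite p(z) = p_{n−1}(p_{n−2}(⋯ p_0(z)⋯)) lies in the Moore complex term NG_n = ∩_{i=0}^{n-1} Ker(d_i^n). -/
import Mathlib


/-- A simplicial group: groups `G n` with face maps `d n i : G (n+1) →* G n`
and degeneracies `s n i : G n →* G (n+1)` satisfying the simplicial identities
(asserted in the meaningful index ranges). -/
structure SGrp where
  G : ℕ → Type
  grp : ∀ n, Group (G n)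
  d : (n : ℕ) → ℕ → (G (n+1) →* G n)
  s : (n : ℕ) → ℕ → (G n →* G (n+1))
  dd : ∀ n i j, i < j → j ≤ n + 2 → ∀ x,
    d n i (d (n+1) j x) = d n (j-1) (d (n+1) i x)
  ds_lt : ∀ n i j, i < j → j ≤ n + 1 → ∀ x,
    d (n+1) i (s (n+1) j x) = s n (j-1) (d n i x)
  ds_eq : ∀ n j, j ≤ n → ∀ x, d n j (s n j x) = x
  ds_succ : ∀ n j, j ≤ n → ∀ x, d n (j+1) (s n j x) = x
  ds_gt : ∀ n i j, j + 1 < i → i ≤ n + 2 → ∀ x,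
    d (n+1) i (s (n+1) j x) = s n j (d n (i-1) x)
  ss : ∀ n i j, i ≤ j → j ≤ n → ∀ x,
    s (n+1) i (s n j x) = s (n+1) (j+1) (s n i x)

attribute [instance] SGrp.grp

/-- Moore complex: `NG 0 = G 0`, `NG (n+1) = ⋂_{i ≤ n} ker (d_i)`. -/
def SGrp.NG (X : SGrp) : (n : ℕ) → Subgroup (X.G n)
  | 0 => ⊤
  | (n+1) => ⨅ i ∈ Finset.range (n+1), (X.d n i).ker

/-- Transport along an equality of dimensions. -/
def SGrp.castHom (X : SGrp) {a b : ℕ} (h : a = b) : X.G a →* X.G b where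
  toFun x := h ▸ x
  map_one' := by subst h; rfl
  map_mul' x y := by subst h; rfl

/-- Composite degeneracy `s_α = s_{i_l} ⋯ s_{i_1}` for `α = [i_l, …, i_1]`
(head applied last). -/
def SGrp.sComp (X : SGrp) : (m : ℕ) → (α : List ℕ) → (X.G m →* X.G (m + α.length))
  | _, [] => MonoidHom.id _
  | m, i :: rest => (X.s (m + rest.length) i).comp (X.sComp m rest)

/-- `s_α : G_{n-#α} →* G_n` for `α ∈ S(n)` (the trivial hom if lengths mismatch). -/
def SGrp.sMapN (X : SGrp) (n : ℕ) (α : List ℕ) : X.G (n - α.length) →* X.G n :=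
  if h : n - α.length + α.length = n then
    (X.castHom h).comp (X.sComp (n - α.length) α) else 1

/-- `p_j(z) = z ⬝ (s_j d_j z)⁻¹` on `G (n+1)`. -/
def SGrp.p (X : SGrp) (n j : ℕ) (z : X.G (n+1)) : X.G (n+1) :=
  z * (X.s n j (X.d n j z))⁻¹

/-- `pComp n j = p_j ∘ ⋯ ∘ p_0` on `G (n+1)`. -/
def SGrp.pComp (X : SGrp) (n : ℕ) : ℕ → X.G (n+1) → X.G (n+1)
  | 0 => X.p n 0
  | (j+1) => fun z => X.p n (j+1) (X.pComp n j z)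

/-- `pComp1 n l = p_l ∘ ⋯ ∘ p_1` on `G (n+1)` (identity for `l = 0`). -/
def SGrp.pComp1 (X : SGrp) (n : ℕ) : ℕ → X.G (n+1) → X.G (n+1)
  | 0 => id
  | (j+1) => fun z => X.p n (j+1) (X.pComp1 n j z)

/-- The ordering of `S(n)` from the paper: `α < β` iff comparing from the
smallest indices (the reversed lists), either the first difference has the
index of `α` larger, or `α`'s indices (from the small end) form a proper
prefix of `β`'s. -/
def Slt (α β : List ℕ) : Prop := List.Lex (· > ·) α.reverse β.reverse

/-- `α` represents a nonidentity element of `S(N)`: a nonempty strictly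
decreasing tuple of indices `< N`. -/
def SIdx (N : ℕ) (α : List ℕ) : Prop :=
  α ≠ [] ∧ α.Chain' (· > ·) ∧ α.length ≤ N ∧ ∀ i ∈ α, i < N

/-- the composite `p = p_{n-1} ∘ ⋯ ∘ p_0` (here on `G (n+1)`,
with `p_j(z) = z·s_j d_j(z)⁻¹`, `0 ≤ j ≤ n`) lands in the Moore complex term
`NG_{n+1} = ⋂_{i=0}^{n} Ker d_i`. -/
lemma stmt4_key (X : SGrp) (n : ℕ) (z : X.G (n+1)) :
    ∀ j, j ≤ n → ∀ i ≤ j, X.d n i (X.pComp n j z) = 1 := by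
  intro j
  induction j with
  | zero =>
    intro _ i hi
    interval_cases i
    simp [SGrp.pComp, SGrp.p, X.ds_eq n 0 (Nat.zero_le n)]
  | succ j ih =>
    intro hj i hi
    obtain ⟨m, rfl⟩ : ∃ m, n = m + 1 := ⟨n - 1, by omega⟩
    set w := X.pComp (m+1) j z with hw
    show X.d (m+1) i (X.p (m+1) (j+1) w) = 1
    rcases Nat.lt_or_ge i (j+1) with hlt | hge
    · have hiw : X.d (m+1) i w = 1 := ih (by omega) i (by omega)
      have h1 : X.d (m+1) i (X.s (m+1) (j+1) (X.d (m+1) (j+1) w))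
          = X.s m j (X.d m i (X.d (m+1) (j+1) w)) := by
        have := X.ds_lt m i (j+1) hlt (by omega) (X.d (m+1) (j+1) w)
        simpa using this
      have h2 : X.d m i (X.d (m+1) (j+1) w) = X.d m j (X.d (m+1) i w) := by
        have := X.dd m i (j+1) hlt (by omega) w
        simpa using this
      simp [SGrp.p, h1, h2, hiw]
    · have hij : i = j + 1 := by omega
      subst hij
      simp [SGrp.p, X.ds_eq (m+1) (j+1) (by omega)]

theorem stmt4 (X : SGrp) (n : ℕ) (z : X.G (n+1)) :
    X.pComp n n z ∈ X.NG (n+1) := by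
  simp only [SGrp.NG, Subgroup.mem_iInf, MonoidHom.mem_ker, Finset.mem_range]
  intro i hi
  exact stmt4_key X n z n le_rfl i (by omega)
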